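/- The characteristic polynomial of the geometric lattice ℰ^n equals that of the partition lattice of an (n+1)-set: χ_{ℰ^n}(x) := Σ_{(A,P) ∈ ℰ^N} μ_{ℰ^N}((∅,P_⊥),(A,P)) · x^{n − r(A,P)} = (x−1)(x−2)⋯(x−n). -/

import Mathlib

open scoped BigOperators

/-- `modp n A` is the modular partition `P^A_⊥` of `Fin n` whose unique (possibly)
non-singleton block is `A`, all other blocks being singletons. -/
def modp (n : ℕ) (A : Set (Fin n)) : Setoid (Fin n) where
  r x y := x = y ∨ (x ∈ A ∧ y ∈ A)
  iseqv := by
    refine ⟨fun _ => Or.inl rfl, ?_, ?_⟩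
    · rintro x y (rfl | ⟨hx, hy⟩)
      · exact Or.inl rfl
      · exact Or.inr ⟨hy, hx⟩
    · rintro x y z (rfl | ⟨hx, hy⟩) h
      · exact h
      · rcases h with rfl | ⟨hy', hz⟩
        · exact Or.inr ⟨hx, hy⟩
        · exact Or.inr ⟨hx, hz⟩

/-- The product `X^N = 2^N × 𝒫^N` of the subset lattice and the partition lattice,
ordered componentwise. -/
abbrev XN (n : ℕ) := Set (Fin n) × Setoid (Fin n)

/-- The closure operator `cl` on `X^N`:  `cl(∅,P) = (∅,P)` and, for `A ≠ ∅`,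
`cl(A,P) = (Ā, P ⊔ P^A_⊥)` where `Ā` is the block of `P ⊔ P^A_⊥` containing `A`. -/
def EmbClosure (n : ℕ) (x : XN n) : XN n :=
  ({y | ∃ a ∈ x.1, (x.2 ⊔ modp n x.1) y a}, x.2 ⊔ modp n x.1)

/-- An embedded subset is a pair that coincides with its closure. -/
def IsEmbedded (n : ℕ) (x : XN n) : Prop := EmbClosure n x = x

/-- The lattice `ℰ^N` of embedded subsets, with the induced order. -/
abbrev Emb (n : ℕ) := {x : XN n // IsEmbedded n x}

lemma modp_le_of_subsingleton {n : ℕ} {A : Set (Fin n)} (h : A.Subsingleton)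
    (Q : Setoid (Fin n)) : modp n A ≤ Q := by
  rw [Setoid.le_def]
  intro x y hxy
  rcases hxy with rfl | ⟨hx, hy⟩
  · exact Q.refl' x
  · obtain rfl := h hx hy
    exact Q.refl' x

lemma modp_eq_bot_of_subsingleton {n : ℕ} {A : Set (Fin n)} (h : A.Subsingleton) :
    modp n A = ⊥ :=
  le_antisymm (modp_le_of_subsingleton h ⊥) bot_le

lemma embedded_empty (n : ℕ) (Q : Setoid (Fin n)) : IsEmbedded n (∅, Q) := by
  unfold IsEmbedded EmbClosure
  refine Prod.ext ?_ ?_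
  · simp
  · simpa using sup_eq_left.mpr (modp_le_of_subsingleton Set.subsingleton_empty Q)

lemma embedded_univ_top (n : ℕ) : IsEmbedded n (Set.univ, ⊤) := by
  unfold IsEmbedded EmbClosure
  refine Prod.ext ?_ ?_
  · ext y
    simp only [Set.mem_setOf_eq, Set.mem_univ, iff_true]
    exact ⟨y, trivial, Setoid.refl' _ y⟩
  · exact sup_eq_left.mpr le_top

lemma embedded_singleton (n : ℕ) (i : Fin n) : IsEmbedded n ({i}, ⊥) := by
  have hb : modp n ({i} : Set (Fin n)) = ⊥ :=
    modp_eq_bot_of_subsingleton Set.subsingleton_singleton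
  unfold IsEmbedded EmbClosure
  refine Prod.ext ?_ ?_
  · ext y
    simp only [Set.mem_setOf_eq, hb, sup_idem, Set.mem_singleton_iff]
    constructor
    · rintro ⟨a, ha, hrel⟩
      subst ha
      change ((⊥ : Setoid (Fin n)) ⊔ modp n {a}) y a at hrel
      rw [hb, sup_idem] at hrel
      simpa [Setoid.bot_def] using hrel
    · rintro rfl
      exact ⟨y, rfl, Setoid.refl' _ y⟩
  · simp [hb]

/-- The bottom element `(∅, P_⊥)` of `ℰ^N`. -/
def botE (n : ℕ) : Emb n := ⟨(∅, ⊥), embedded_empty n ⊥⟩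

/-- The top element `(N, P^⊤)` of `ℰ^N`. -/
def topE (n : ℕ) : Emb n := ⟨(Set.univ, ⊤), embedded_univ_top n⟩

/-- The atom `({i}, P_⊥)` of `ℰ^N`. -/
def atomS (n : ℕ) (i : Fin n) : Emb n := ⟨({i}, ⊥), embedded_singleton n i⟩

/-- The atom `(∅, [ij])` of `ℰ^N`, where `[ij]` is the atom of the partition lattice
whose unique non-singleton block is the pair `{i, j}`. -/
def atomP (n : ℕ) (i j : Fin n) : Emb n := ⟨(∅, modp n {i, j}), embedded_empty n _⟩

/-- A pair is an atom candidate: of the form `({i},P_⊥)` or `(∅,[ij])` with `i ≠ j`. -/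
def IsAtomPair (n : ℕ) (a : XN n) : Prop :=
  (∃ i : Fin n, a = ({i}, ⊥)) ∨ ∃ i j : Fin n, i ≠ j ∧ a = (∅, modp n {i, j})

/-- The number of blocks `|P|` of a partition. -/
noncomputable def numBlocks {α : Type*} (P : Setoid α) : ℕ := P.classes.ncard

/-- The rank function `r(A,P) = (n − |P|) + min{|A|,1}` of `ℰ^N`. -/
noncomputable def erank (n : ℕ) (x : XN n) : ℕ := (n - numBlocks x.2) + min x.1.ncard 1

/-- The partition `Q^S` of `S` induced by a partition `Q` of `N`. -/
def indPart {n : ℕ} (S : Set (Fin n)) (Q : Setoid (Fin n)) : Setoid S :=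
  Setoid.comap Subtype.val Q

/-- `mu` is the Möbius function of the (finite) poset `α`. -/
def IsMobius {α : Type*} [PartialOrder α] (mu : α → α → ℤ) : Prop :=
  (∀ x, mu x x = 1) ∧
  (∀ x y, ¬x ≤ y → mu x y = 0) ∧
  (∀ x y, x < y → mu x y = -∑ᶠ z ∈ Set.Ico x y, mu x z)


instance setoidFinite {α : Type*} [Finite α] : Finite (Setoid α) :=
  Finite.of_injective (fun s => s.r) (fun s t h => by cases s; cases t; cases h; rfl)

lemma modp_le_iff {n : ℕ} {A : Set (Fin n)} {P : Setoid (Fin n)} :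
    modp n A ≤ P ↔ ∀ a ∈ A, ∀ b ∈ A, P a b := by
  rw [Setoid.le_def]
  constructor
  · intro h a ha b hb; exact h (Or.inr ⟨ha, hb⟩)
  · rintro h x y (rfl | ⟨hx, hy⟩)
    · exact P.refl' x
    · exact h x hx y hy

lemma isEmbedded_iff {n : ℕ} {A : Set (Fin n)} {P : Setoid (Fin n)} :
    IsEmbedded n (A, P) ↔
      ((∀ a ∈ A, ∀ b ∈ A, P a b) ∧ ∀ a ∈ A, ∀ b, P b a → b ∈ A) := by
  unfold IsEmbedded EmbClosure
  rw [Prod.ext_iff]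
  constructor
  · rintro ⟨h1, h2⟩
    simp only at h1 h2
    have hle : modp n A ≤ P := h2 ▸ le_sup_right
    refine ⟨modp_le_iff.mp hle, ?_⟩
    intro a ha b hba
    have hba' : (P ⊔ modp n A) b a := Setoid.le_def.mp le_sup_left hba
    have : b ∈ {y | ∃ a ∈ A, (P ⊔ modp n A) y a} := ⟨a, ha, hba'⟩
    rwa [h1] at this
  · rintro ⟨h1, h2⟩
    have hle : modp n A ≤ P := modp_le_iff.mpr h1
    have hsup : P ⊔ modp n A = P := sup_eq_left.mpr hle
    refine ⟨?_, hsup⟩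
    simp only [hsup]
    ext y
    simp only [Set.mem_setOf_eq]
    constructor
    · rintro ⟨a, ha, hya⟩; exact h2 a ha y (by have hya' : (P ⊔ modp n A) y a := hya; rwa [hsup] at hya')
    · intro hy; exact ⟨y, hy, Setoid.refl' _ y⟩

lemma emb_h1 {n : ℕ} (x : Emb n) : ∀ a ∈ x.val.1, ∀ b ∈ x.val.1, x.val.2 a b :=
  (isEmbedded_iff.mp x.2).1

lemma emb_h2 {n : ℕ} (x : Emb n) : ∀ a ∈ x.val.1, ∀ b, x.val.2 b a → b ∈ x.val.1 :=
  (isEmbedded_iff.mp x.2).2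

/-- Extend an embedded pair on `Fin n` to a partition of `Option (Fin n)`. -/
def extSetoid {n : ℕ} (x : Emb n) : Setoid (Option (Fin n)) where
  r u v := match u, v with
    | some a, some b => x.val.2 a b
    | some a, none => a ∈ x.val.1
    | none, some b => b ∈ x.val.1
    | none, none => True
  iseqv := by
    constructor
    · rintro (_ | a)
      · trivial
      · exact x.val.2.refl' _
    · rintro (_ | a) (_ | b) h
      case none.none => trivial
      case none.some => exact h
      case some.none => exact h
      case some.some => exact x.val.2.symm' h
    · rintro (_ | a) (_ | b) (_ | c) h h'
      case none.none.none => trivial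
      case none.none.some => exact h'
      case none.some.none => trivial
      case none.some.some => exact emb_h2 x _ h _ (x.val.2.symm' h')
      case some.none.none => exact h
      case some.none.some => exact emb_h1 x _ h _ h'
      case some.some.none => exact emb_h2 x _ h' _ h
      case some.some.some => exact x.val.2.trans' h h'

lemma extSetoid_some_some {n : ℕ} (x : Emb n) (a b : Fin n) :
    (extSetoid x) (some a) (some b) ↔ x.val.2 a b := Iff.rfl
lemma extSetoid_some_none {n : ℕ} (x : Emb n) (a : Fin n) :
    (extSetoid x) (some a) none ↔ a ∈ x.val.1 := Iff.rfl

/-- The embedded pair induced by a coloring of `Option (Fin n)`. -/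
def kerE {n : ℕ} {β : Type*} (h : Option (Fin n) → β) : Emb n :=
  ⟨({i | h (some i) = h none}, Setoid.comap some (Setoid.ker h)), by
    rw [isEmbedded_iff]
    constructor
    · intro a ha b hb
      show h (some a) = h (some b)
      rw [Set.mem_setOf_eq] at ha hb
      rw [ha, hb]
    · intro a ha b hba
      have : h (some b) = h (some a) := hba
      rw [Set.mem_setOf_eq] at ha ⊢
      rw [this, ha]⟩

lemma le_kerE_iff {n : ℕ} {β : Type*} (x : Emb n) (h : Option (Fin n) → β) :
    x ≤ kerE h ↔ extSetoid x ≤ Setoid.ker h := by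
  rw [Subtype.mk_le_mk, Prod.le_def, Setoid.le_def]
  constructor
  · rintro ⟨hA, hP⟩ (a | a) (b | b) huv
    · rfl
    · exact (hA huv).symm
    · exact hA huv
    · exact hP huv
  · intro H
    constructor
    · intro a ha
      exact @H (some a) none ha
    · intro a b hab
      exact @H (some a) (some b) hab



/-- colorings respecting a setoid correspond to colorings of the quotient -/
def liftEquiv {α β : Type*} (s : Setoid α) :
    {h : α → β // s ≤ Setoid.ker h} ≃ (Quotient s → β) where
  toFun p := Quotient.lift p.val (fun a b hab => Setoid.le_def.mp p.2 hab)
  invFun g := ⟨fun a => g (Quotient.mk s a), by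
    rw [Setoid.le_def]; intro a b hab
    show g _ = g _
    rw [Quotient.sound hab]⟩
  left_inv p := Subtype.ext rfl
  right_inv g := by
    funext q
    induction q using Quotient.ind
    rfl

lemma card_le_ker {α β : Type*} [Finite α] (s : Setoid α) :
    Nat.card {h : α → β // s ≤ Setoid.ker h} = Nat.card β ^ Nat.card (Quotient s) := by
  rw [Nat.card_congr (liftEquiv s), Nat.card_fun]

lemma numBlocks_eq_card_quot {α : Type*} (P : Setoid α) :
    numBlocks P = Nat.card (Quotient P) := by
  rw [numBlocks, ← Nat.card_coe_set_eq, Nat.card_congr (Setoid.quotientEquivClasses P)]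

lemma card_quot_le {n : ℕ} (P : Setoid (Fin n)) : Nat.card (Quotient P) ≤ n := by
  have := Nat.card_le_card_of_surjective (Quotient.mk P) (Quotient.mk_surjective)
  simpa using this

/-- The quotient of the extension, when `A = ∅`. -/
def extQuotEquivEmpty {n : ℕ} (x : Emb n) (hA : x.val.1 = ∅) :
    Quotient (extSetoid x) ≃ Option (Quotient x.val.2) where
  toFun := Quotient.lift (fun u => u.map (Quotient.mk x.val.2)) (by
    rintro (_ | a) (_ | b) hab
    · rfl
    · exact absurd (hA ▸ hab : (b : Fin n) ∈ (∅ : Set (Fin n))) (Set.notMem_empty b)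
    · exact absurd (hA ▸ hab : (a : Fin n) ∈ (∅ : Set (Fin n))) (Set.notMem_empty a)
    · exact congrArg some (Quotient.sound hab))
  invFun o := Option.elim o (Quotient.mk _ none)
    (Quotient.lift (fun a => Quotient.mk (extSetoid x) (some a))
      (fun a b hab => Quotient.sound (hab : extSetoid x (some a) (some b))))
  left_inv := by
    apply Quotient.ind
    rintro (_ | a) <;> rfl
  right_inv := by
    rintro (_ | q)
    · rfl
    · induction q using Quotient.ind
      rfl

/-- The quotient of the extension, when `A ≠ ∅`. -/
def extQuotEquivNonempty {n : ℕ} (x : Emb n) (a₀ : Fin n) (ha₀ : a₀ ∈ x.val.1) :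
    Quotient (extSetoid x) ≃ Quotient x.val.2 where
  toFun := Quotient.lift (fun u => Quotient.mk x.val.2 (u.getD a₀)) (by
    rintro (_ | a) (_ | b) hab
    · rfl
    · exact Quotient.sound (emb_h1 x a₀ ha₀ b hab)
    · exact Quotient.sound (emb_h1 x a hab a₀ ha₀)
    · exact Quotient.sound hab)
  invFun := Quotient.lift (fun a => Quotient.mk (extSetoid x) (some a))
    (fun a b hab => Quotient.sound (hab : extSetoid x (some a) (some b)))
  left_inv := by
    apply Quotient.ind
    rintro (_ | a)
    · exact Quotient.sound (ha₀ : extSetoid x (some a₀) none)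
    · rfl
  right_inv := by
    apply Quotient.ind
    intro a
    rfl

lemma card_quot_ext {n : ℕ} (hn : 1 ≤ n) (x : Emb n) :
    Nat.card (Quotient (extSetoid x)) = (n - erank n x.val) + 1 := by
  have hb : numBlocks x.val.2 = Nat.card (Quotient x.val.2) := numBlocks_eq_card_quot _
  have hble : Nat.card (Quotient x.val.2) ≤ n := card_quot_le _
  rcases Set.eq_empty_or_nonempty x.val.1 with hA | ⟨a₀, ha₀⟩
  · rw [Nat.card_congr (extQuotEquivEmpty x hA)]
    have : Nat.card (Option (Quotient x.val.2)) = Nat.card (Quotient x.val.2) + 1 := by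
      haveI := Fintype.ofFinite (Quotient x.val.2)
      simp [Nat.card_eq_fintype_card]
    rw [this, erank, hA]
    simp only [Set.ncard_empty, Nat.zero_min, add_zero, hb]
    omega
  · rw [Nat.card_congr (extQuotEquivNonempty x a₀ ha₀)]
    have hbpos : 1 ≤ Nat.card (Quotient x.val.2) := by
      have : Nonempty (Quotient x.val.2) := ⟨Quotient.mk _ ⟨0, hn⟩⟩
      exact Nat.card_pos
    have hAn : min x.val.1.ncard 1 = 1 := by
      have : 1 ≤ x.val.1.ncard := by
        rw [Nat.one_le_iff_ne_zero]
        simp [Set.ncard_eq_zero (Set.toFinite _)]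
        exact Set.nonempty_iff_ne_empty.mp ⟨a₀, ha₀⟩
      omega
    rw [erank, hAn, hb]
    omega


section Mob
open Finset
attribute [local instance] Classical.propDecidable

variable {n : ℕ}

noncomputable instance : Fintype (Emb n) := Fintype.ofFinite _

lemma botE_le (x : Emb n) : botE n ≤ x :=
  Subtype.coe_le_coe.mp ⟨Set.empty_subset _, bot_le⟩

lemma mob_delta (mu : Emb n → Emb n → ℤ) (hmu : IsMobius mu) (y : Emb n) :
    ∑ x ∈ univ.filter (· ≤ y), mu (botE n) x = if y = botE n then 1 else 0 := by
  by_cases hy : y = botE n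
  · subst hy
    have : univ.filter (· ≤ botE n) = {botE n} := by
      ext x
      simp only [mem_filter, mem_univ, true_and, mem_singleton]
      exact ⟨fun h => le_antisymm h (botE_le x), fun h => h ▸ le_refl _⟩
    rw [this, sum_singleton, if_pos rfl, hmu.1]
  · have hlt : botE n < y := lt_of_le_of_ne (botE_le y) (Ne.symm hy)
    have hrec := hmu.2.2 _ _ hlt
    have hico : Set.Ico (botE n) y = ↑(univ.filter (fun x => x ≤ y ∧ x ≠ y)) := by
      ext x
      simp [Set.mem_Ico, lt_iff_le_and_ne, botE_le]
    rw [hico, finsum_mem_coe_finset] at hrec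
    have hsplit : univ.filter (· ≤ y) = insert y (univ.filter (fun x => x ≤ y ∧ x ≠ y)) := by
      ext x
      simp only [mem_filter, mem_univ, true_and, mem_insert]
      constructor
      · intro h
        by_cases hxy : x = y
        · exact Or.inl hxy
        · exact Or.inr ⟨h, hxy⟩
      · rintro (rfl | ⟨h, _⟩)
        · exact le_refl _
        · exact h
    rw [hsplit, Finset.sum_insert (by simp), hrec, if_neg hy, neg_add_cancel]

lemma mob_inv (mu : Emb n → Emb n → ℤ) (hmu : IsMobius mu) (f : Emb n → ℤ) :
    ∑ x : Emb n, mu (botE n) x * (∑ y ∈ univ.filter (fun y => x ≤ y), f y) = f (botE n) := by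
  have h1 : ∀ x : Emb n, mu (botE n) x * (∑ y ∈ univ.filter (fun y => x ≤ y), f y)
      = ∑ y : Emb n, (if x ≤ y then mu (botE n) x else 0) * f y := by
    intro x
    rw [Finset.sum_filter, Finset.mul_sum]
    apply Finset.sum_congr rfl
    intro y _
    split_ifs <;> ring
  rw [Finset.sum_congr rfl (fun x _ => h1 x), Finset.sum_comm]
  have h2 : ∀ y : Emb n, ∑ x : Emb n, (if x ≤ y then mu (botE n) x else 0) * f y
      = (if y = botE n then 1 else 0) * f y := by
    intro y
    rw [← Finset.sum_mul, ← Finset.sum_filter, mob_delta mu hmu y]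
  rw [Finset.sum_congr rfl (fun y _ => h2 y)]
  simp [Finset.sum_ite_eq']

lemma nat_card_filter {α : Type*} [Fintype α] (p : α → Prop) [DecidablePred p] :
    Nat.card {a // p a} = (univ.filter p).card := by
  rw [Nat.card_eq_fintype_card, Fintype.card_subtype]

lemma kerE_eq_botE_iff {t : ℕ} (h : Option (Fin n) → Fin t) :
    kerE h = botE n ↔ Function.Injective h := by
  rw [Subtype.ext_iff, Prod.ext_iff]
  constructor
  · rintro ⟨h1, h2⟩ u v huv
    match u, v with
    | some a, some b =>
      have hab : ((kerE h : Emb n) : XN n).2 a b := huv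
      rw [h2] at hab
      exact congrArg some hab
    | some a, none =>
      have hm : a ∈ ((kerE h : Emb n) : XN n).1 := huv
      rw [h1] at hm
      exact absurd hm (Set.notMem_empty a)
    | none, some b =>
      have hm : b ∈ ((kerE h : Emb n) : XN n).1 := huv.symm
      rw [h1] at hm
      exact absurd hm (Set.notMem_empty b)
    | none, none => rfl
  · intro hinj
    refine ⟨?_, ?_⟩
    · show {i | h (some i) = h none} = (∅ : Set (Fin n))
      ext i
      simp only [Set.mem_setOf_eq, Set.mem_empty_iff_false, iff_false]
      intro hi
      exact Option.some_ne_none i (hinj hi)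
    · show Setoid.comap some (Setoid.ker h) = (⊥ : Setoid (Fin n))
      apply le_antisymm _ bot_le
      rw [Setoid.le_def]
      intro a b hab
      have hab' : a = b := Option.some_injective _ (hinj hab)
      exact hab' ▸ Setoid.refl' ⊥ a

lemma card_inj_colorings (t : ℕ) :
    Nat.card {h : Option (Fin n) → Fin t // Function.Injective h}
      = Nat.descFactorial t (n + 1) := by
  rw [Nat.card_congr (Equiv.subtypeInjectiveEquivEmbedding _ _), Nat.card_eq_fintype_card,
    Fintype.card_embedding_eq, Fintype.card_fin, Fintype.card_option, Fintype.card_fin]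

lemma count_identity (hn : 1 ≤ n) (mu : Emb n → Emb n → ℤ) (hmu : IsMobius mu) (t : ℕ) :
    ∑ x : Emb n, mu (botE n) x * (t : ℤ) ^ ((n - erank n x.val) + 1)
      = (Nat.descFactorial t (n + 1) : ℤ) := by
  have hg : ∀ x : Emb n,
      ((univ.filter fun h : Option (Fin n) → Fin t => x ≤ kerE h).card : ℤ)
        = (t : ℤ) ^ ((n - erank n x.val) + 1) := by
    intro x
    have e1 : (univ.filter fun h : Option (Fin n) → Fin t => x ≤ kerE h)
        = (univ.filter fun h : Option (Fin n) → Fin t => extSetoid x ≤ Setoid.ker h) := by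
      ext h
      simp only [mem_filter, mem_univ, true_and]
      exact le_kerE_iff x h
    rw [e1, ← nat_card_filter, card_le_ker, Nat.card_eq_fintype_card, Fintype.card_fin,
      card_quot_ext hn x]
    push_cast
    ring
  have hgf : ∀ x : Emb n,
      (univ.filter fun h : Option (Fin n) → Fin t => x ≤ kerE h).card
        = ∑ y ∈ univ.filter (fun y => x ≤ y),
            (univ.filter fun h : Option (Fin n) → Fin t => kerE h = y).card := by
    intro x
    rw [Finset.card_eq_sum_card_fiberwise
      (f := kerE) (t := univ.filter (fun y => x ≤ y))
      (fun h hh => by simp only [Finset.mem_coe, mem_filter, mem_univ, true_and] at hh ⊢; exact hh)]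
    apply Finset.sum_congr rfl
    intro y hy
    simp only [mem_filter, mem_univ, true_and] at hy
    congr 1
    ext h
    simp only [mem_filter, mem_univ, true_and]
    constructor
    · rintro ⟨_, h2⟩; exact h2
    · intro h2; exact ⟨h2 ▸ hy, h2⟩
  have hfbot : ((univ.filter fun h : Option (Fin n) → Fin t => kerE h = botE n).card : ℤ)
      = (Nat.descFactorial t (n + 1) : ℤ) := by
    norm_cast
    have hnc : (univ.filter fun h : Option (Fin n) → Fin t => kerE h = botE n).card
        = Nat.card {h : Option (Fin n) → Fin t // kerE h = botE n} :=
      (nat_card_filter _).symm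
    rw [hnc, ← card_inj_colorings t]
    apply Nat.card_congr
    exact Equiv.subtypeEquivRight (fun h => kerE_eq_botE_iff h)
  calc ∑ x : Emb n, mu (botE n) x * (t : ℤ) ^ ((n - erank n x.val) + 1)
      = ∑ x : Emb n, mu (botE n) x *
          (∑ y ∈ univ.filter (fun y => x ≤ y),
            ((univ.filter fun h : Option (Fin n) → Fin t => kerE h = y).card : ℤ)) := by
        apply Finset.sum_congr rfl
        intro x _
        rw [← hg x, hgf x]
        push_cast
        ring
    _ = (Nat.descFactorial t (n + 1) : ℤ) := by
        rw [mob_inv mu hmu]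
        exact hfbot

end Mob

section Final
open Finset Polynomial
attribute [local instance] Classical.propDecidable

lemma int_identity {n : ℕ} (hn : 1 ≤ n) (mu : Emb n → Emb n → ℤ) (hmu : IsMobius mu)
    (t : ℕ) (ht : n + 1 ≤ t) :
    ∑ x : Emb n, mu (botE n) x * (t : ℤ) ^ (n - erank n x.val)
      = ∏ k ∈ Finset.Icc 1 n, ((t : ℤ) - k) := by
  have h0 : (0 : ℤ) < (t : ℤ) := by exact_mod_cast Nat.lt_of_lt_of_le (by omega) ht
  have key := count_identity hn mu hmu t
  have hL : ∑ x : Emb n, mu (botE n) x * (t : ℤ) ^ ((n - erank n x.val) + 1)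
      = (t : ℤ) * ∑ x : Emb n, mu (botE n) x * (t : ℤ) ^ (n - erank n x.val) := by
    rw [Finset.mul_sum]
    apply Finset.sum_congr rfl
    intro x _
    ring
  have hR : ((Nat.descFactorial t (n + 1) : ℕ) : ℤ)
      = (t : ℤ) * ∏ k ∈ Finset.Icc 1 n, ((t : ℤ) - k) := by
    rw [Nat.descFactorial_eq_prod_range, Nat.cast_prod]
    have hcast : ∀ i ∈ Finset.range (n + 1), ((t - i : ℕ) : ℤ) = (t : ℤ) - i := by
      intro i hi
      rw [Finset.mem_range] at hi
      have : i ≤ t := by omega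
      exact Nat.cast_sub this
    rw [Finset.prod_congr rfl hcast, Finset.prod_range_succ']
    have hre : ∏ i ∈ Finset.range n, ((t : ℤ) - (↑(i + 1) : ℤ))
        = ∏ k ∈ Finset.Icc 1 n, ((t : ℤ) - k) := by
      apply Finset.prod_nbij (fun i => i + 1)
      · intro a ha
        simp only [Finset.mem_range] at ha
        simp only [Finset.mem_Icc]
        omega
      · intro a _ b _ hab
        simpa using hab
      · intro k hk
        simp only [Finset.coe_Icc, Set.mem_Icc] at hk
        refine ⟨k - 1, ?_, show k - 1 + 1 = k by omega⟩
        simp only [Finset.coe_range, Set.mem_Iio]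
        omega
      · intro a _
        push_cast
        ring
    rw [hre]
    push_cast
    ring
  apply mul_left_cancel₀ h0.ne'
  rw [← hL, key, hR]

end Final

theorem char_poly (n : ℕ) (hn : 1 ≤ n) (mu : Emb n → Emb n → ℤ) (hmu : IsMobius mu) :
    ∀ t : ℝ, ∑ᶠ x : Emb n, (mu (botE n) x : ℝ) * t ^ (n - erank n x.val) =
      ∏ k ∈ Finset.Icc 1 n, (t - (k : ℝ)) := by
  classical
  set p : Polynomial ℝ :=
    ∑ x : Emb n, Polynomial.C ((mu (botE n) x : ℝ)) * Polynomial.X ^ (n - erank n x.val) with hp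
  set q : Polynomial ℝ := ∏ k ∈ Finset.Icc 1 n, (Polynomial.X - Polynomial.C (k : ℝ)) with hq
  have hevalp : ∀ t : ℝ,
      p.eval t = ∑ x : Emb n, (mu (botE n) x : ℝ) * t ^ (n - erank n x.val) := by
    intro t
    rw [hp, Polynomial.eval_finset_sum]
    simp
  have hevalq : ∀ t : ℝ, q.eval t = ∏ k ∈ Finset.Icc 1 n, (t - (k : ℝ)) := by
    intro t
    rw [hq, Polynomial.eval_prod]
    simp
  have hpq : p = q := by
    apply Polynomial.eq_of_infinite_eval_eq
    refine Set.infinite_of_injective_forall_mem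
      (f := fun m : ℕ => ((m + (n + 1) : ℕ) : ℝ)) ?_ ?_
    · intro a b hab
      have h' : a + (n + 1) = b + (n + 1) := Nat.cast_inj.mp hab
      omega
    · intro m
      show p.eval _ = q.eval _
      rw [hevalp, hevalq]
      have hid := int_identity hn mu hmu (m + (n + 1)) (by omega)
      have hid' : ∑ x : Emb n, (mu (botE n) x : ℝ) * (((m + (n + 1) : ℕ) : ℝ)) ^ (n - erank n x.val)
          = ∏ k ∈ Finset.Icc 1 n, (((m + (n + 1) : ℕ) : ℝ) - (k : ℝ)) := by
        exact_mod_cast hid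
      exact hid'
  intro t
  rw [finsum_eq_sum_of_fintype, ← hevalp, hpq, hevalq]
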